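/- Let R be a ring, σ an automorphism of R, δ a σ-derivation, S = R[x; σ, δ], and M a right R-module. If M is nonsingular as an R-module, then the induced right S-module M ⊗_R S is nonsingular as an S-module. -/

import Mathlib

open MulOpposite

/-- `δ` is a `σ`-derivation of the ring `R`. -/
def IsSigmaDeriv {R : Type} [Ring R] (σ : R ≃+* R) (δ : R → R) : Prop :=
  (∀ a b, δ (a + b) = δ a + δ b) ∧ ∀ a b, δ (a * b) = σ a * δ b + δ a * b

/-- A presentation of the skew polynomial ring `S = R[x; σ, δ]`: `S` is a ring containing an
image of `R` via `ι`, with an element `x` satisfying `x·r = σ(r)·x + δ(r)`, and `S` is free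
as a left `R`-module with basis the powers of `x`. -/
structure SkewPoly (R S : Type) [Ring R] [Ring S] (σ : R ≃+* R) (δ : R → R) : Type where
  ι : R →+* S
  x : S
  comm : ∀ r : R, x * ι r = ι (σ r) * x + ι (δ r)
  basis : Function.Bijective fun c : ℕ →₀ R => c.sum fun i a => ι a * x ^ i

/-- A presentation of the induced right `S`-module `M ⊗_R S` of a right `R`-module `M`
(right modules are encoded as modules over the opposite ring): `N` is a right `S`-module
containing `M` via `j`, compatibly with the right `R`-actions, and every element of `N` is
uniquely a polynomial `∑ (j mᵢ)·xⁱ` with coefficients in `M`. -/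
structure Induced (R S M N : Type) [Ring R] [Ring S] [AddCommGroup M] [Module Rᵐᵒᵖ M]
    [AddCommGroup N] [Module Sᵐᵒᵖ N] {σ : R ≃+* R} {δ : R → R}
    (sp : SkewPoly R S σ δ) : Type where
  j : M →+ N
  j_smul : ∀ (r : R) (m : M), j (op r • m) = op (sp.ι r) • j m
  free : Function.Bijective fun c : ℕ →₀ M => c.sum fun i m => op (sp.x ^ i) • j m

variable {R S M N : Type} [Ring R] [Ring S] [AddCommGroup M] [Module Rᵐᵒᵖ M]
  [AddCommGroup N] [Module Sᵐᵒᵖ N] {σ : R ≃+* R} {δ : R → R}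

/-- The polynomial `∑ (j mᵢ)·xⁱ` in `M ⊗_R S` with coefficient family `c`. -/
def pol (sp : SkewPoly R S σ δ) (im : Induced R S M N sp) (c : ℕ →₀ M) : N :=
  c.sum fun i m => op (sp.x ^ i) • im.j m

/-- `ν ∈ M ⊗_R S` has degree exactly `k`. -/
def DegEq (sp : SkewPoly R S σ δ) (im : Induced R S M N sp) (ν : N) (k : ℕ) : Prop :=
  ∃ c : ℕ →₀ M, pol sp im c = ν ∧ c k ≠ 0 ∧ ∀ i, k < i → c i = 0

/-- `ν` is a good polynomial of degree `k`: whenever `ν·r ≠ 0` for `r ∈ R`,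
`deg (ν·r) = deg ν = k`. -/
def GoodAt (sp : SkewPoly R S σ δ) (im : Induced R S M N sp) (ν : N) (k : ℕ) : Prop :=
  DegEq sp im ν k ∧ ∀ r : R, op (sp.ι r) • ν ≠ 0 → DegEq sp im (op (sp.ι r) • ν) k

/-- `ν` is a good polynomial. -/
def Good (sp : SkewPoly R S σ δ) (im : Induced R S M N sp) (ν : N) : Prop :=
  ∃ k, GoodAt sp im ν k

/-- A subset `J` of a ring `T` (to be applied to right annihilators, which are right ideals)
is essential as a right ideal: every nonzero `t ∈ T` has a nonzero right multiple in `J`. -/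
def EssAnn {T : Type} [Ring T] (J : Set T) : Prop :=
  ∀ t : T, t ≠ 0 → ∃ s : T, t * s ≠ 0 ∧ t * s ∈ J

-- ==================== auxiliary lemmas ====================

lemma my_op_sum_smul {T V : Type} [Ring T] [AddCommGroup V] [Module Tᵐᵒᵖ V] {κ : Type}
    (s : Finset κ) (f : κ → T) (v : V) :
    op (∑ i ∈ s, f i) • v = ∑ i ∈ s, op (f i) • v := by
  induction s using Finset.cons_induction with
  | empty => simp
  | cons i s hi ih => rw [Finset.sum_cons, Finset.sum_cons, op_add, add_smul, ih]

lemma my_pol_zero (sp : SkewPoly R S σ δ) (im : Induced R S M N sp) : pol sp im 0 = 0 :=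
  Finsupp.sum_zero_index

lemma my_pol_add (sp : SkewPoly R S σ δ) (im : Induced R S M N sp) (c c' : ℕ →₀ M) :
    pol sp im (c + c') = pol sp im c + pol sp im c' :=
  Finsupp.sum_add_index' (fun i => by simp) (fun i m m' => by rw [map_add, smul_add])

lemma my_pol_sum (sp : SkewPoly R S σ δ) (im : Induced R S M N sp) {κ : Type}
    (s : Finset κ) (F : κ → (ℕ →₀ M)) :
    pol sp im (∑ l ∈ s, F l) = ∑ l ∈ s, pol sp im (F l) := by
  induction s using Finset.cons_induction with
  | empty => simp [my_pol_zero]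
  | cons i s hi ih => rw [Finset.sum_cons, Finset.sum_cons, my_pol_add, ih]

lemma my_pol_injective (sp : SkewPoly R S σ δ) (im : Induced R S M N sp) :
    Function.Injective (pol sp im) := im.free.injective

lemma my_iota_ne_zero (sp : SkewPoly R S σ δ) (r : R) (hr : r ≠ 0) : sp.ι r ≠ 0 := by
  intro h
  apply hr
  have h2 : ((Finsupp.single 0 r : ℕ →₀ R).sum fun i a => sp.ι a * sp.x ^ i)
      = ((0 : ℕ →₀ R).sum fun i a => sp.ι a * sp.x ^ i) := by
    rw [Finsupp.sum_single_index (by simp), Finsupp.sum_zero_index, pow_zero, mul_one, h]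
  have := sp.basis.injective h2
  exact Finsupp.single_eq_zero.mp this

lemma my_xpow_mul_iota (sp : SkewPoly R S σ δ) (hδ : IsSigmaDeriv σ δ) (i : ℕ) (r : R) :
    ∃ c : ℕ →₀ R, (c.sum fun l a => sp.ι a * sp.x ^ l) = sp.x ^ i * sp.ι r ∧
      (∀ l, i < l → c l = 0) ∧ c i = (σ ^ i) r := by
  have hδz : δ 0 = 0 := by
    have h := hδ.1 0 0
    rw [add_zero] at h
    exact (left_eq_add.mp h)
  induction i with
  | zero =>
    refine ⟨Finsupp.single 0 r, ?_, ?_, ?_⟩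
    · rw [Finsupp.sum_single_index (by simp)]; simp
    · intro l hl; exact Finsupp.single_eq_of_ne (by omega)
    · rw [Finsupp.single_eq_same, pow_zero]; rfl
  | succ i ih =>
    obtain ⟨c, hsum, hbd, htop⟩ := ih
    set emb : ℕ ↪ ℕ := ⟨fun n => n + 1, add_left_injective _⟩ with hemb
    refine ⟨Finsupp.embDomain emb (c.mapRange σ (map_zero σ)) + c.mapRange δ hδz, ?_, ?_, ?_⟩
    · rw [Finsupp.sum_add_index' (fun l => by simp) (fun l a b => by rw [map_add, add_mul]),
        Finsupp.sum_embDomain, Finsupp.sum_mapRange_index (fun l => by simp),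
        Finsupp.sum_mapRange_index (fun l => by simp [hδz]),
        pow_succ' sp.x i, mul_assoc, ← hsum, Finsupp.mul_sum _ _, ← Finsupp.sum_add]
      refine Finsupp.sum_congr fun l _ => ?_
      rw [← mul_assoc, sp.comm, add_mul, mul_assoc, ← pow_succ']
      simp [hemb]
    · intro l hl
      obtain ⟨k, rfl⟩ : ∃ k, l = k + 1 := ⟨l - 1, by omega⟩
      have h1 : c k = 0 := hbd k (by omega)
      have h2 : c (k + 1) = 0 := hbd _ (by omega)
      have h3 : (Finsupp.embDomain emb (c.mapRange σ (map_zero σ))) (k + 1) = σ (c k) := by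
        have := Finsupp.embDomain_apply_self emb (c.mapRange σ (map_zero σ)) k
        simpa [hemb] using this
      simp [Finsupp.add_apply, h3, h1, h2, hδz]
    · have h2 : c (i + 1) = 0 := hbd _ (by omega)
      have h3 : (Finsupp.embDomain emb (c.mapRange σ (map_zero σ))) (i + 1) = σ (c i) := by
        have := Finsupp.embDomain_apply_self emb (c.mapRange σ (map_zero σ)) i
        simpa [hemb] using this
      have hp : (σ ^ (i + 1)) r = σ ((σ ^ i) r) := by
        have : σ ^ (i + 1) = σ * σ ^ i := pow_succ' σ i
        rw [this]; rfl
      simp [Finsupp.add_apply, h3, h2, hδz, htop, hp]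

lemma my_act_iota (sp : SkewPoly R S σ δ) (im : Induced R S M N sp) (hδ : IsSigmaDeriv σ δ)
    (c : ℕ →₀ M) (d : ℕ) (hc : ∀ i, d < i → c i = 0) (r : R) :
    ∃ c' : ℕ →₀ M, op (sp.ι r) • pol sp im c = pol sp im c' ∧ (∀ i, d < i → c' i = 0) ∧
      c' d = op ((σ ^ d) r) • c d := by
  choose e he1 he2 he3 using fun i => my_xpow_mul_iota sp hδ i r
  refine ⟨∑ i ∈ c.support, (e i).mapRange (fun a => op a • c i) (by simp), ?_, ?_, ?_⟩
  · have key : ∀ i, pol sp im ((e i).mapRange (fun a => op a • c i) (by simp))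
        = op (sp.ι r) • (op (sp.x ^ i) • im.j (c i)) := by
      intro i
      have hr : op (sp.ι r) • (op (sp.x ^ i) • im.j (c i))
          = op (sp.x ^ i * sp.ι r) • im.j (c i) := by
        rw [smul_smul, ← op_mul]
      rw [hr, ← he1 i, Finsupp.sum, my_op_sum_smul]
      unfold pol
      rw [Finsupp.sum_mapRange_index (fun l => by simp), Finsupp.sum]
      exact Finset.sum_congr rfl fun l _ => by rw [im.j_smul, smul_smul, ← op_mul]
    rw [my_pol_sum, Finset.sum_congr rfl fun i _ => key i, ← Finset.smul_sum]
    rfl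
  · intro q hq
    rw [Finset.sum_apply']
    apply Finset.sum_eq_zero
    intro i hi
    have hid : ¬ d < i := fun h => Finsupp.mem_support_iff.mp hi (hc i h)
    rw [Finsupp.mapRange_apply, he2 i q (by omega)]
    simp
  · rw [Finset.sum_apply', Finset.sum_eq_single d]
    · rw [Finsupp.mapRange_apply, he3]
    · intro i hi hne
      have hid : ¬ d < i := fun h => Finsupp.mem_support_iff.mp hi (hc i h)
      rw [Finsupp.mapRange_apply, he2 i d (by omega)]
      simp
    · intro hd
      rw [Finsupp.mapRange_apply, Finsupp.notMem_support_iff.mp hd]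
      simp

lemma my_act_xpow (sp : SkewPoly R S σ δ) (im : Induced R S M N sp) (c : ℕ →₀ M) (l : ℕ) :
    ∃ c' : ℕ →₀ M, op (sp.x ^ l) • pol sp im c = pol sp im c' ∧
      (∀ i, c' (i + l) = c i) ∧ ∀ q, (∀ i, q ≠ i + l) → c' q = 0 := by
  set emb : ℕ ↪ ℕ := ⟨fun n => n + l, add_left_injective _⟩ with hemb
  refine ⟨Finsupp.embDomain emb c, ?_, ?_, ?_⟩
  · unfold pol
    rw [Finsupp.sum_embDomain, Finsupp.smul_sum]
    refine Finsupp.sum_congr fun i _ => ?_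
    rw [smul_smul, ← op_mul, ← pow_add]
    simp [hemb]
  · intro i
    have := Finsupp.embDomain_apply_self emb c i
    simpa [hemb] using this
  · intro q hq
    apply Finsupp.embDomain_notin_range
    rintro ⟨i, hi⟩
    exact hq i (by simpa [hemb] using hi.symm)


/-- if `M` is nonsingular as a right `R`-module, then the induced module
`M ⊗_R S` is nonsingular as a right `S`-module. -/
theorem stmt10 (sp : SkewPoly R S σ δ) (im : Induced R S M N sp) (hδ : IsSigmaDeriv σ δ)
    (hM : ∀ m : M, EssAnn {r : R | op r • m = 0} → m = 0) :
    ∀ ν : N, EssAnn {f : S | op f • ν = 0} → ν = 0 := by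
  intro ν hess
  by_contra hν
  obtain ⟨c, hc⟩ := im.free.surjective ν
  have hc' : pol sp im c = ν := hc
  have hc0 : c ≠ 0 := by rintro rfl; exact hν (by rw [← hc', my_pol_zero])
  have hsupp : c.support.Nonempty := Finsupp.support_nonempty_iff.mpr hc0
  set d := c.support.max' hsupp with hd
  have hm : c d ≠ 0 := Finsupp.mem_support_iff.mp (c.support.max'_mem hsupp)
  have hbound : ∀ i, d < i → c i = 0 := by
    intro i hi
    by_contra h
    exact absurd (c.support.le_max' i (Finsupp.mem_support_iff.mpr h)) (not_le.mpr hi)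
  refine hm (hM (c d) ?_)
  intro t ht
  set r₀ := (σ ^ d).symm t with hr₀def
  have hr0 : r₀ ≠ 0 := fun h => ht (by rw [← (σ ^ d).apply_symm_apply t, ← hr₀def, h, map_zero])
  obtain ⟨f, hgne, hgann⟩ := hess (sp.ι r₀) (my_iota_ne_zero sp _ hr0)
  obtain ⟨a, ha⟩ := sp.basis.surjective f
  have ha' : (a.sum fun i u => sp.ι u * sp.x ^ i) = f := ha
  set b : ℕ →₀ R := a.mapRange (fun u => r₀ * u) (mul_zero r₀) with hbdef
  have hbsum : (b.sum fun l u => sp.ι u * sp.x ^ l) = sp.ι r₀ * f := by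
    rw [hbdef, Finsupp.sum_mapRange_index (fun l => by simp), ← ha', Finsupp.mul_sum _ _]
    exact Finsupp.sum_congr fun l _ => by rw [map_mul, mul_assoc]
  have hbne : b ≠ 0 := by
    intro hb0
    apply hgne
    rw [← hbsum, hb0, Finsupp.sum_zero_index]
  have hbs : b.support.Nonempty := Finsupp.support_nonempty_iff.mpr hbne
  set e := b.support.max' hbs with he
  have hbe : b e ≠ 0 := Finsupp.mem_support_iff.mp (b.support.max'_mem hbs)
  have htse : t * (σ ^ d) (a e) = (σ ^ d) (b e) := by
    have hbea : b e = r₀ * a e := by rw [hbdef, Finsupp.mapRange_apply]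
    rw [hbea, map_mul, hr₀def, (σ ^ d).apply_symm_apply]
  refine ⟨(σ ^ d) (a e), ?_, ?_⟩
  · rw [htse]
    exact fun h => hbe ((σ ^ d).injective (h.trans (map_zero _).symm))
  · show op (t * (σ ^ d) (a e)) • c d = 0
    rw [htse]
    choose cf hcf1 hcf2 hcf3 using fun l => my_act_iota sp im hδ c d hbound (b l)
    choose cs hcs1 hcs2 hcs3 using fun l => my_act_xpow sp im (cf l) l
    have hC : pol sp im (∑ l ∈ b.support, cs l) = 0 := by
      rw [my_pol_sum]
      have h1 : ∀ l ∈ b.support, pol sp im (cs l) = op (sp.ι (b l) * sp.x ^ l) • ν := by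
        intro l _
        rw [← hcs1 l, ← hcf1 l, hc', smul_smul, ← op_mul]
      rw [Finset.sum_congr rfl h1, ← my_op_sum_smul]
      have h2 : (∑ l ∈ b.support, sp.ι (b l) * sp.x ^ l) = sp.ι r₀ * f := hbsum
      rw [h2]
      exact hgann
    have hC0 : (∑ l ∈ b.support, cs l) = 0 :=
      my_pol_injective sp im (by rw [hC, my_pol_zero])
    have hterm : (∑ l ∈ b.support, cs l) (d + e) = op ((σ ^ d) (b e)) • c d := by
      rw [Finset.sum_apply', Finset.sum_eq_single_of_mem e (b.support.max'_mem hbs)]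
      · rw [hcs2 e d, hcf3 e]
      · intro l hl hne
        have hle : l < e := lt_of_le_of_ne (b.support.le_max' l hl) hne
        have hdec : d + e = (d + e - l) + l := by omega
        rw [hdec, hcs2 l, hcf2 l _ (by omega)]
    rw [← hterm, hC0]
    rfl
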